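/- The category FPCM of trace monoids and basic homomorphisms is cocomplete, and the inclusion functor FPCM → Mon preserves all small colimits. -/

import Mathlib

open CategoryTheory

/-- The elementary commutation relation on words generated by an independence relation. -/
def traceRel (E : Type) (I : Set (E × E)) : FreeMonoid E → FreeMonoid E → Prop :=
  fun x y => ∃ a b : E, (a, b) ∈ I ∧ x = FreeMonoid.of a * FreeMonoid.of b ∧
    y = FreeMonoid.of b * FreeMonoid.of a

/-- The congruence on the free monoid generated by commutation of independent pairs. -/
def traceCon (E : Type) (I : Set (E × E)) : Con (FreeMonoid E) := conGen (traceRel E I)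

/-- The trace monoid `M(E,I)`. -/
abbrev TraceMonoid (E : Type) (I : Set (E × E)) : Type := (traceCon E I).Quotient

/-- The canonical projection from words to traces. -/
def trcMk {E : Type} {I : Set (E × E)} : FreeMonoid E →* TraceMonoid E I :=
  (traceCon E I).mk'

/-- The generator of the trace monoid corresponding to an event `e`. -/
def trc {E : Type} {I : Set (E × E)} (e : E) : TraceMonoid E I :=
  trcMk (FreeMonoid.of e)

/-- `I` is an independence relation: irreflexive and symmetric. -/
structure IsIndep {E : Type} (I : Set (E × E)) : Prop where
  irrefl : ∀ a : E, (a, a) ∉ I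
  symm : ∀ a b : E, (a, b) ∈ I → (b, a) ∈ I

/-- A homomorphism of trace monoids is basic if it sends generators to generators or to `1`. -/
def IsBasic {E E' : Type} {I : Set (E × E)} {I' : Set (E' × E')}
    (f : TraceMonoid E I →* TraceMonoid E' I') : Prop :=
  ∀ e : E, (∃ e' : E', f (trc e) = trc e') ∨ f (trc e) = 1

/-- A basic homomorphism preserves independence. -/
def IsIndepPres {E E' : Type} {I : Set (E × E)} {I' : Set (E' × E')}
    (f : TraceMonoid E I →* TraceMonoid E' I') : Prop :=
  ∀ a b : E, (a, b) ∈ I → f (trc a) ≠ f (trc b) ∨ (f (trc a) = 1 ∧ f (trc b) = 1)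

/-- The monoid homomorphism out of a trace monoid induced by a map on generators whose
images commute at independent pairs. -/
def liftHom {E : Type} {I : Set (E × E)} {N : Type*} [Monoid N] (φ : E → N)
    (hφ : ∀ a b : E, (a, b) ∈ I → φ a * φ b = φ b * φ a) : TraceMonoid E I →* N :=
  (traceCon E I).lift (FreeMonoid.lift φ) (by
    refine @id (traceCon E I ≤ Con.ker (FreeMonoid.lift φ)) (Con.conGen_le.2 ?_)
    rintro x y ⟨a, b, hab, rfl, rfl⟩
    rw [Con.ker_rel]
    simp only [map_mul, FreeMonoid.lift_eval_of]
    exact hφ a b hab)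

@[simp] theorem liftHom_trc {E : Type} {I : Set (E × E)} {N : Type*} [Monoid N] (φ : E → N)
    (hφ : ∀ a b : E, (a, b) ∈ I → φ a * φ b = φ b * φ a) (e : E) :
    liftHom φ hφ (trc (I := I) e) = φ e := by
  show (traceCon E I).lift _ _ ((traceCon E I).mk' (FreeMonoid.of e)) = φ e
  rw [Con.lift_mk']
  simp

theorem trc_comm {E : Type} {I : Set (E × E)} {a b : E} (h : (a, b) ∈ I) :
    (trc a : TraceMonoid E I) * trc b = trc b * trc a := by
  show trcMk (FreeMonoid.of a) * trcMk (FreeMonoid.of b) =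
    trcMk (FreeMonoid.of b) * trcMk (FreeMonoid.of a)
  rw [← map_mul, ← map_mul]
  exact (Con.eq _).2 (ConGen.Rel.of _ _ ⟨a, b, h, rfl, rfl⟩)

theorem isBasic_id {E : Type} {I : Set (E × E)} :
    IsBasic (MonoidHom.id (TraceMonoid E I)) := fun e => Or.inl ⟨e, rfl⟩

theorem isBasic_comp {E₁ E₂ E₃ : Type} {I₁ : Set (E₁ × E₁)} {I₂ : Set (E₂ × E₂)}
    {I₃ : Set (E₃ × E₃)} {f : TraceMonoid E₁ I₁ →* TraceMonoid E₂ I₂}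
    {g : TraceMonoid E₂ I₂ →* TraceMonoid E₃ I₃} (hf : IsBasic f) (hg : IsBasic g) :
    IsBasic (g.comp f) := by
  intro e
  rcases hf e with ⟨e', he⟩ | he
  · rcases hg e' with ⟨e'', he''⟩ | he''
    · exact Or.inl ⟨e'', by simp [MonoidHom.comp_apply, he, he'']⟩
    · exact Or.inr (by simp [MonoidHom.comp_apply, he, he''])
  · exact Or.inr (by simp [MonoidHom.comp_apply, he])
/-- An object of the category `FPCM`: a set of events with an independence relation. -/
structure FPCMObj where
  E : Type
  I : Set (E × E)
  indep : IsIndep I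

/-- The category `FPCM` of trace monoids and basic homomorphisms. -/
instance : Category FPCMObj where
  Hom X Y := {f : TraceMonoid X.E X.I →* TraceMonoid Y.E Y.I // IsBasic f}
  id _ := ⟨MonoidHom.id _, isBasic_id⟩
  comp f g := ⟨g.1.comp f.1, isBasic_comp f.2 g.2⟩
  id_comp _ := Subtype.ext (MonoidHom.comp_id _)
  comp_id _ := Subtype.ext (MonoidHom.id_comp _)
  assoc _ _ _ := Subtype.ext rfl

/-- The inclusion functor from `FPCM` into the category of monoids. -/
def UFPCM : FPCMObj ⥤ MonCat.{0} where
  obj X := MonCat.of (TraceMonoid X.E X.I)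
  map f := MonCat.ofHom f.1
  map_id _ := rfl
  map_comp _ _ := rfl

/-- The independence relation on the non-identity elements of a monoid given by distinct
commuting pairs. -/
def IMon (M : Type) [Monoid M] : Set ({m : M // m ≠ 1} × {m : M // m ≠ 1}) :=
  {p | p.1 ≠ p.2 ∧ (p.1 : M) * (p.2 : M) = (p.2 : M) * (p.1 : M)}

/-- The trace monoid `M(M \ {1}, I_M)` associated to a monoid `M`. -/
def RFPCMObj (M : MonCat.{0}) : FPCMObj where
  E := {m : M // m ≠ 1}
  I := IMon M
  indep := ⟨fun _ h => h.1 rfl, fun _ _ h => ⟨fun e => h.1 e.symm, h.2.symm⟩⟩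

/-- The counit homomorphism `ε_M : M(M \ {1}, I_M) → M`, defined on generators by
`ε_M(μ) = μ`. -/
def epsFPCM (M : MonCat.{0}) :
    TraceMonoid (RFPCMObj M).E (RFPCMObj M).I →* M :=
  liftHom (fun m : {m : M // m ≠ 1} => m.val) (fun _ _ h => h.2)

open CategoryTheory.Limits


/-! ### Auxiliary development -/

open scoped Classical

/-- Extensionality for homs out of a trace monoid. -/
theorem traceHom_ext {E : Type} {I : Set (E × E)} {N : Type*} [Monoid N]
    {f g : TraceMonoid E I →* N} (h : ∀ e : E, f (trc e) = g (trc e)) : f = g := by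
  have H : f.comp trcMk = g.comp trcMk := FreeMonoid.hom_eq (fun a => h a)
  refine MonoidHom.ext fun x => ?_
  obtain ⟨w, rfl⟩ := Con.mk'_surjective x
  exact DFunLike.congr_fun H w

section ColimitConstruction

variable {J : Type} [Category J] (F : J ⥤ FPCMObj)

/-- The identification relation on (optional) events of a diagram. -/
def colimRel : Option (Σ j : J, (F.obj j).E) → Option (Σ j : J, (F.obj j).E) → Prop :=
  fun p q => ∃ (j k : J) (u : j ⟶ k) (e : (F.obj j).E), p = some ⟨j, e⟩ ∧
    ((∃ e', (F.map u).1 (trc e) = trc e' ∧ q = some ⟨k, e'⟩) ∨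
      ((F.map u).1 (trc e) = 1 ∧ q = none))

/-- The quotient of optional events. -/
abbrev QF : Type := Quot (colimRel F)

/-- The events of the colimit. -/
abbrev colimE : Type := {x : QF F // x ≠ Quot.mk (colimRel F) none}

/-- The independence relation of the colimit. -/
def colimI : Set (colimE F × colimE F) :=
  {p | p.1 ≠ p.2 ∧ ∃ (j : J) (a b : (F.obj j).E), (a, b) ∈ (F.obj j).I ∧
    (p.1 : QF F) = Quot.mk (colimRel F) (some ⟨j, a⟩) ∧
    (p.2 : QF F) = Quot.mk (colimRel F) (some ⟨j, b⟩)}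

/-- The colimit object. -/
def colimObj : FPCMObj where
  E := colimE F
  I := colimI F
  indep := by
    constructor
    · intro a ⟨h, _⟩; exact h rfl
    · rintro a b ⟨hne, j, x, y, hxy, hx, hy⟩
      exact ⟨fun e => hne e.symm, j, y, x, (F.obj j).indep.symm _ _ hxy, hy, hx⟩

/-- The generator-or-one associated to a class. -/
noncomputable def thetaF (q : QF F) : TraceMonoid (colimE F) (colimI F) :=
  if h : q = Quot.mk (colimRel F) none then 1 else trc ⟨q, h⟩

theorem thetaF_comm {j : J} {a b : (F.obj j).E} (hab : (a, b) ∈ (F.obj j).I) :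
    thetaF F (Quot.mk _ (some ⟨j, a⟩)) * thetaF F (Quot.mk _ (some ⟨j, b⟩)) =
    thetaF F (Quot.mk _ (some ⟨j, b⟩)) * thetaF F (Quot.mk _ (some ⟨j, a⟩)) := by
  unfold thetaF
  by_cases h1 : (Quot.mk (colimRel F) (some ⟨j, a⟩)) = Quot.mk (colimRel F) none
  · simp [h1]
  by_cases h2 : (Quot.mk (colimRel F) (some ⟨j, b⟩)) = Quot.mk (colimRel F) none
  · simp [h1, h2]
  rw [dif_neg h1, dif_neg h2]
  by_cases heq : (Quot.mk (colimRel F) (some ⟨j, a⟩)) = Quot.mk (colimRel F) (some ⟨j, b⟩)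
  · have : (⟨Quot.mk (colimRel F) (some ⟨j, a⟩), h1⟩ : colimE F) =
        ⟨Quot.mk (colimRel F) (some ⟨j, b⟩), h2⟩ := Subtype.ext heq
    rw [this]
  · exact trc_comm ⟨fun hc => heq (congrArg Subtype.val hc), j, a, b, hab, rfl, rfl⟩

/-- The leg homomorphism into the colimit. -/
noncomputable def colimLeg (j : J) :
    TraceMonoid (F.obj j).E (F.obj j).I →* TraceMonoid (colimE F) (colimI F) :=
  liftHom (fun e => thetaF F (Quot.mk _ (some ⟨j, e⟩))) (fun _ _ hab => thetaF_comm F hab)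

theorem colimLeg_trc (j : J) (e : (F.obj j).E) :
    colimLeg F j (trc e) = thetaF F (Quot.mk _ (some ⟨j, e⟩)) := by
  rw [colimLeg, liftHom_trc]

theorem colimLeg_basic (j : J) : IsBasic (colimLeg F j) := by
  intro e
  rw [colimLeg_trc, thetaF]
  by_cases h : (Quot.mk (colimRel F) (some ⟨j, e⟩)) = Quot.mk (colimRel F) none
  · exact Or.inr (dif_pos h)
  · exact Or.inl ⟨⟨_, h⟩, dif_neg h⟩

theorem colimLeg_natural {j k : J} (u : j ⟶ k) (e : (F.obj j).E) :
    colimLeg F k ((F.map u).1 (trc e)) = colimLeg F j (trc e) := by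
  rcases (F.map u).2 e with ⟨e', he⟩ | he
  · rw [he, colimLeg_trc, colimLeg_trc]
    exact congrArg (thetaF F) (Quot.sound ⟨j, k, u, e, rfl, Or.inl ⟨e', he, rfl⟩⟩).symm
  · rw [he, map_one, colimLeg_trc]
    have h0 : (Quot.mk (colimRel F) (some ⟨j, e⟩)) = Quot.mk (colimRel F) none :=
      Quot.sound ⟨j, k, u, e, rfl, Or.inr ⟨he, rfl⟩⟩
    rw [thetaF, dif_pos h0]

open CategoryTheory.Limits in
/-- The colimit cocone. -/
noncomputable def colimCocone : Cocone F where
  pt := colimObj F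
  ι := { app := fun j => ⟨colimLeg F j, colimLeg_basic F j⟩,
         naturality := fun j k u => Subtype.ext (traceHom_ext fun e => by
           show colimLeg F k ((F.map u).1 (trc e)) = (MonoidHom.id _).comp (colimLeg F j) (trc e)
           rw [colimLeg_natural]; rfl) }

theorem colimE_cases (x : colimE F) :
    ∃ (j : J) (e : (F.obj j).E), x.val = Quot.mk (colimRel F) (some ⟨j, e⟩) := by
  obtain ⟨p, hp⟩ := Quot.exists_rep x.val
  cases p with
  | none => exact absurd hp.symm x.2
  | some pe => exact ⟨pe.1, pe.2, hp.symm⟩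

section Desc
open CategoryTheory.Limits
variable (c : Cocone F)

/-- The raw map on optional events to the target trace monoid. -/
def descRaw : Option (Σ j : J, (F.obj j).E) → TraceMonoid c.pt.E c.pt.I
  | none => 1
  | some ⟨j, e⟩ => (c.ι.app j).1 (trc e)

theorem cocone_nat {j k : J} (u : j ⟶ k) (x : TraceMonoid (F.obj j).E (F.obj j).I) :
    (c.ι.app k).1 ((F.map u).1 x) = (c.ι.app j).1 x := by
  have h := congrArg Subtype.val (c.ι.naturality u)
  have h2 := DFunLike.congr_fun h x
  exact h2

theorem descRaw_respects : ∀ p q, colimRel F p q → descRaw F c p = descRaw F c q := by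
  rintro p q ⟨j, k, u, e, rfl, (⟨e', he, rfl⟩ | ⟨he, rfl⟩)⟩
  · show (c.ι.app j).1 (trc e) = (c.ι.app k).1 (trc e')
    rw [← he, cocone_nat]
  · show (c.ι.app j).1 (trc e) = 1
    rw [← cocone_nat F c u, he, map_one]

/-- The descended map on the quotient. -/
def descQ : QF F → TraceMonoid c.pt.E c.pt.I :=
  Quot.lift (descRaw F c) (descRaw_respects F c)

/-- The descent homomorphism out of the colimit. -/
def descHom : TraceMonoid (colimE F) (colimI F) →* TraceMonoid c.pt.E c.pt.I :=
  liftHom (fun x => descQ F c x.val) (by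
    rintro x y ⟨hne, j, a, b, hab, hx, hy⟩
    show descQ F c x.val * descQ F c y.val = descQ F c y.val * descQ F c x.val
    rw [hx, hy]
    show (c.ι.app j).1 (trc a) * (c.ι.app j).1 (trc b) =
      (c.ι.app j).1 (trc b) * (c.ι.app j).1 (trc a)
    rw [← map_mul, ← map_mul, trc_comm hab])

theorem descHom_trc (x : colimE F) : descHom F c (trc x) = descQ F c x.val := by
  rw [descHom, liftHom_trc]

theorem descHom_basic : IsBasic (descHom F c) := by
  intro x
  obtain ⟨j, e, hx⟩ := colimE_cases F x
  rw [descHom_trc, hx]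
  exact (c.ι.app j).2 e

theorem descHom_theta (q : QF F) : descHom F c (thetaF F q) = descQ F c q := by
  rw [thetaF]
  by_cases h : q = Quot.mk (colimRel F) none
  · rw [dif_pos h, map_one, h]; rfl
  · rw [dif_neg h, descHom_trc]

/-- The colimit cocone is a colimit. -/
noncomputable def colimIsColimit : IsColimit (colimCocone F) where
  desc c := ⟨descHom F c, descHom_basic F c⟩
  fac c j := Subtype.ext (traceHom_ext fun e => by
    show descHom F c (colimLeg F j (trc e)) = (c.ι.app j).1 (trc e)
    rw [colimLeg_trc, descHom_theta]
    rfl)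
  uniq c m hm := Subtype.ext (traceHom_ext fun x => by
    obtain ⟨j, e, hx⟩ := colimE_cases F x
    have hleg : colimLeg F j (trc e) = trc x := by
      rw [colimLeg_trc, thetaF, dif_neg (hx ▸ x.2)]
      exact congrArg trc (Subtype.ext hx.symm)
    have h1 : m.1 (trc x) = (c.ι.app j).1 (trc e) := by
      exact (congrArg m.1 hleg).symm.trans (DFunLike.congr_fun (congrArg Subtype.val (hm j)) (trc e))
    rw [h1]
    show (c.ι.app j).1 (trc e) = descHom F c (trc x)
    exact ((descHom_trc F c x).trans (congrArg (descQ F c) hx)).symm)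

end Desc
end ColimitConstruction

open CategoryTheory.Limits in
instance fpcmHasColimits : HasColimits FPCMObj where
  has_colimits_of_shape J _ :=
    { has_colimit := fun F => HasColimit.mk ⟨colimCocone F, colimIsColimit F⟩ }

/-! ### The right adjoint -/

/-- The generator-or-one of the trace monoid of a monoid. -/
noncomputable def embM (M : MonCat.{0}) (m : M) :
    TraceMonoid (RFPCMObj M).E (RFPCMObj M).I :=
  if h : m = 1 then 1 else trc ⟨m, h⟩

theorem embM_comm (M : MonCat.{0}) {x y : M} (h : x * y = y * x) :
    embM M x * embM M y = embM M y * embM M x := by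
  unfold embM
  by_cases hx : x = 1
  · simp [hx]
  by_cases hy : y = 1
  · simp [hx, hy]
  rw [dif_neg hx, dif_neg hy]
  by_cases hxy : x = y
  · subst hxy; rfl
  · exact trc_comm ⟨fun hc => hxy (congrArg Subtype.val hc), h⟩

theorem eps_embM (M : MonCat.{0}) (m : M) : epsFPCM M (embM M m) = m := by
  rw [embM]
  by_cases h : m = 1
  · rw [dif_pos h, map_one, h]
  · rw [dif_neg h]; exact liftHom_trc _ _ _

/-- The induced basic hom into the cofree trace monoid. -/
noncomputable def indHom {E : Type} {I : Set (E × E)} {M : MonCat.{0}}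
    (g : TraceMonoid E I →* M) :
    TraceMonoid E I →* TraceMonoid (RFPCMObj M).E (RFPCMObj M).I :=
  liftHom (fun e => embM M (g (trc e))) (fun a b hab => embM_comm M (by
    rw [← map_mul, ← map_mul, trc_comm hab]))

@[simp] theorem indHom_trc {E : Type} {I : Set (E × E)} {M : MonCat.{0}}
    (g : TraceMonoid E I →* M) (e : E) : indHom g (trc e) = embM M (g (trc e)) := by
  rw [indHom, liftHom_trc]

theorem indHom_eps_of_basic {X : FPCMObj} {M : MonCat.{0}}
    (h : TraceMonoid X.E X.I →* TraceMonoid (RFPCMObj M).E (RFPCMObj M).I) (hb : IsBasic h) :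
    indHom ((epsFPCM M).comp h) = h := traceHom_ext fun e => by
  rw [indHom_trc, MonoidHom.comp_apply]
  rcases hb e with ⟨e', he⟩ | he
  · rw [he, show epsFPCM M (trc e') = e'.val from liftHom_trc _ _ _, embM, dif_neg e'.2]
    exact congrArg trc (Subtype.ext rfl)
  · rw [he, map_one, embM, dif_pos rfl]

theorem indHom_basic {E : Type} {I : Set (E × E)} {M : MonCat.{0}}
    (g : TraceMonoid E I →* M) : IsBasic (indHom g) := by
  intro e
  rw [indHom_trc, embM]
  by_cases h : g (trc e) = 1
  · exact Or.inr (dif_pos h)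
  · exact Or.inl ⟨⟨_, h⟩, dif_neg h⟩

theorem indHom_embM {M N : MonCat.{0}} (f : M ⟶ N) (m : M) :
    indHom (f.hom.comp (epsFPCM M)) (embM M m) = embM N (f m) := by
  rw [embM]
  by_cases h : m = 1
  · rw [dif_pos h, map_one, h, map_one, embM, dif_pos rfl]
  · rw [dif_neg h, show indHom (f.hom.comp (epsFPCM M)) (trc ⟨m, h⟩) =
      embM N (f.hom.comp (epsFPCM M) (trc ⟨m, h⟩)) from indHom_trc _ _]
    congr 1

/-- The right adjoint to the inclusion functor. -/
noncomputable def RFPCM : MonCat.{0} ⥤ FPCMObj where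
  obj M := RFPCMObj M
  map {M N} f := ⟨indHom (f.hom.comp (epsFPCM M)), indHom_basic _⟩
  map_id M := Subtype.ext (traceHom_ext fun e => by
    rw [indHom_trc]
    show embM M ((MonoidHom.id M) (epsFPCM M (trc e))) = trc e
    rw [MonoidHom.id_apply, show epsFPCM M (trc e) = e.val from liftHom_trc _ _ _, embM, dif_neg e.2]
    rfl)
  map_comp {M N P} f g := Subtype.ext (traceHom_ext fun e => by
    rw [indHom_trc]
    show embM P ((g.hom.comp f.hom).comp (epsFPCM M) (trc e)) =
      indHom (g.hom.comp (epsFPCM N)) (indHom (f.hom.comp (epsFPCM M)) (trc e))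
    rw [indHom_trc]
    show embM P (g (f (epsFPCM M (trc e)))) =
      indHom (g.hom.comp (epsFPCM N)) (embM N (f (epsFPCM M (trc e))))
    rw [indHom_embM])

/-- The adjunction between the inclusion and the cofree trace monoid functor. -/
noncomputable def adjFPCM : UFPCM ⊣ RFPCM :=
  Adjunction.mkOfHomEquiv
    { homEquiv := fun X M =>
        { toFun := fun g => ⟨indHom g.hom, indHom_basic g.hom⟩
          invFun := fun h => MonCat.ofHom ((epsFPCM M).comp h.1)
          left_inv := fun g => MonCat.Hom.ext (traceHom_ext fun e => by
            show epsFPCM M (indHom g.hom (trc e)) = g.hom (trc e)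
            exact (congrArg (epsFPCM M) (indHom_trc g.hom e)).trans (eps_embM M _))
          right_inv := fun h => Subtype.ext (indHom_eps_of_basic h.1 h.2) }
      homEquiv_naturality_left_symm := fun f g => rfl
      homEquiv_naturality_right := fun {X M M'} g m => Subtype.ext (traceHom_ext fun e => by
        show indHom (m.hom.comp g.hom) (trc e) =
          indHom (m.hom.comp (epsFPCM M)) (indHom g.hom (trc e))
        exact (indHom_trc (m.hom.comp g.hom) e).trans
          (((congrArg (indHom (m.hom.comp (epsFPCM M))) (indHom_trc g.hom e)).trans
            (indHom_embM m _)).symm)) }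

/-- The category `FPCM` is cocomplete, and the inclusion functor `FPCM → Mon`
preserves all small colimits. -/
theorem fpcm_cocomplete_and_inclusion_preserves_colimits :
    HasColimits FPCMObj ∧ Nonempty (PreservesColimits UFPCM) :=
  ⟨fpcmHasColimits, ⟨adjFPCM.leftAdjoint_preservesColimits⟩⟩
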